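/- Let d ≥ 4 and let Γ = {p₀, p₁, …, p_d} be a collection of d + 1 ≥ 5 distinct points in ℙ²(ℂ) such that no d of the points are collinear. Then for every point p ∈ Γ there exists a homogeneous polynomial of degree d − 2 in three variables that vanishes at every point of Γ \ {p} but does not vanish at p. -/

import Mathlib

open MvPolynomial

noncomputable def linPoly (L : (Fin 3 → ℂ) →ₗ[ℂ] ℂ) : MvPolynomial (Fin 3) ℂ :=
  ∑ i, C (L (Pi.single i 1)) * X i

lemma linPoly_isHomogeneous (L : (Fin 3 → ℂ) →ₗ[ℂ] ℂ) : (linPoly L).IsHomogeneous 1 :=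
  IsHomogeneous.sum _ _ _ fun i _ => isHomogeneous_C_mul_X _ i

lemma eval_linPoly (L : (Fin 3 → ℂ) →ₗ[ℂ] ℂ) (v : Fin 3 → ℂ) :
    MvPolynomial.eval v (linPoly L) = L v := by
  have hv : (∑ i, v i • (Pi.single i 1 : Fin 3 → ℂ)) = v := by
    funext j
    simp [Pi.single_apply, Finset.sum_ite_eq']
  conv_rhs => rw [← hv]
  simp [linPoly, Finset.mul_sum, mul_comm]

lemma sep {W : Submodule ℂ (Fin 3 → ℂ)} {x : Fin 3 → ℂ} (hx : x ∉ W) :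
    ∃ L : (Fin 3 → ℂ) →ₗ[ℂ] ℂ, L x ≠ 0 ∧ ∀ w ∈ W, L w = 0 := by
  obtain ⟨f, hf, hf'⟩ := W.exists_dual_map_eq_bot_of_notMem hx inferInstance
  refine ⟨f, hf, fun w hw => ?_⟩
  have : f w ∈ W.map f := Submodule.mem_map_of_mem hw
  rwa [hf', Submodule.mem_bot] at this

lemma rep_notMem_span {p q : Projectivization ℂ (Fin 3 → ℂ)} (h : q ≠ p) :
    q.rep ∉ Submodule.span ℂ ({p.rep} : Set (Fin 3 → ℂ)) := by
  intro hm
  obtain ⟨c, hc⟩ := Submodule.mem_span_singleton.1 hm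
  apply h
  rw [← q.mk_rep, ← p.mk_rep, Projectivization.mk_eq_mk_iff' ℂ _ _ q.rep_nonzero p.rep_nonzero]
  exact ⟨c, hc⟩

lemma mem_span_pair_symm {x a b : Fin 3 → ℂ}
    (h : x ∈ Submodule.span ℂ ({a, b} : Set (Fin 3 → ℂ)))
    (hx : x ∉ Submodule.span ℂ ({a} : Set (Fin 3 → ℂ))) :
    b ∈ Submodule.span ℂ ({x, a} : Set (Fin 3 → ℂ)) := by
  obtain ⟨m, n, hmn⟩ := Submodule.mem_span_pair.1 h
  have hn : n ≠ 0 := by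
    rintro rfl
    exact hx (Submodule.mem_span_singleton.2 ⟨m, by simpa using hmn⟩)
  refine Submodule.mem_span_pair.2 ⟨n⁻¹, -(n⁻¹ * m), ?_⟩
  rw [← hmn]
  funext j
  simp
  field_simp
  ring

lemma span_pair_eq_of_mem {p x y : Fin 3 → ℂ}
    (hx : x ∈ Submodule.span ℂ ({p, y} : Set (Fin 3 → ℂ)))
    (hx' : x ∉ Submodule.span ℂ ({p} : Set (Fin 3 → ℂ))) :
    Submodule.span ℂ ({p, x} : Set (Fin 3 → ℂ)) = Submodule.span ℂ ({p, y} : Set (Fin 3 → ℂ)) := by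
  have hy : y ∈ Submodule.span ℂ ({x, p} : Set (Fin 3 → ℂ)) := mem_span_pair_symm hx hx'
  apply le_antisymm
  · rw [Submodule.span_le]
    rintro z (rfl | rfl)
    · exact Submodule.subset_span (Set.mem_insert _ _)
    · exact hx
  · rw [Submodule.span_le]
    rintro z (rfl | rfl)
    · exact Submodule.subset_span (Set.mem_insert _ _)
    · rwa [Set.pair_comm] at hy

/-- If no `d` of a collection of `d + 1 ≥ 5` distinct points in `ℙ²(ℂ)`
are collinear, then the points impose independent linear conditions on plane curves of
degree `d - 2`: for every point `p` of the collection there is a homogeneous polynomial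
of degree `d - 2` vanishing at all the other points but not at `p`. -/
theorem points_no_d_collinear_impose_independent_conditions
    (d : ℕ) (hd : 4 ≤ d)
    (Γ : Finset (Projectivization ℂ (Fin 3 → ℂ))) (hΓ : Γ.card = d + 1)
    (hncol : ¬ ∃ L : (Fin 3 → ℂ) →ₗ[ℂ] ℂ, L ≠ 0 ∧
      ∃ S : Finset (Projectivization ℂ (Fin 3 → ℂ)), S ⊆ Γ ∧ d ≤ S.card ∧
        ∀ q ∈ S, L q.rep = 0) :
    ∀ p ∈ Γ, ∃ F : MvPolynomial (Fin 3) ℂ, F.IsHomogeneous (d - 2) ∧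
      (∀ q ∈ Γ, q ≠ p → MvPolynomial.eval q.rep F = 0) ∧
      MvPolynomial.eval p.rep F ≠ 0 := by
  classical
  intro p hp
  set Γ' : Finset (Projectivization ℂ (Fin 3 → ℂ)) := Γ.erase p with hΓ'def
  have hΓ' : Γ'.card = d := by
    rw [hΓ'def, Finset.card_erase_of_mem hp, hΓ]
    omega
  have hmemΓ' : ∀ q ∈ Γ', q ≠ p := fun q hq => (Finset.mem_erase.1 hq).1
  -- class size bound: points of Γ' on the line through p and a
  have classbound : ∀ a ∈ Γ',
      (Γ'.filter (fun q => q.rep ∈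
        Submodule.span ℂ ({p.rep, a.rep} : Set (Fin 3 → ℂ)))).card ≤ d - 2 := by
    intro a _
    set W := Submodule.span ℂ ({p.rep, a.rep} : Set (Fin 3 → ℂ)) with hW
    have hfr : Module.finrank ℂ W ≤ 2 := by
      refine (finrank_span_le_card _).trans ?_
      rw [Set.toFinset_insert, Set.toFinset_singleton]
      exact (Finset.card_insert_le _ _).trans (by simp)
    have hWne : W ≠ ⊤ := by
      intro h
      rw [h, finrank_top] at hfr
      have h3 : Module.finrank ℂ (Fin 3 → ℂ) = 3 := by simp
      omega
    obtain ⟨x, hx⟩ : ∃ x, x ∉ W := by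
      by_contra h
      push_neg at h
      exact hWne (Submodule.eq_top_iff'.2 h)
    obtain ⟨L, hLx, hLW⟩ := sep hx
    set S := Γ.filter (fun q => q.rep ∈ W) with hS
    have hpS : p ∈ S :=
      Finset.mem_filter.2 ⟨hp, Submodule.subset_span (Set.mem_insert _ _)⟩
    have hScard : ¬ (d ≤ S.card) := by
      intro hc
      exact hncol ⟨L, fun h0 => hLx (by rw [h0]; rfl), S, Finset.filter_subset _ _, hc,
        fun q hq => hLW _ (Finset.mem_filter.1 hq).2⟩
    have heq : Γ'.filter (fun q => q.rep ∈ W) = S.erase p := by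
      ext q
      simp only [hΓ'def, hS, Finset.mem_filter, Finset.mem_erase]
      tauto
    rw [heq, Finset.card_erase_of_mem hpS]
    omega
  -- key combinatorial step: two disjoint pairs spanning lines missing p
  have key : ∃ a ∈ Γ', ∃ c ∈ Γ', ∃ b ∈ Γ', ∃ e ∈ Γ',
      a ≠ b ∧ c ≠ e ∧ a ≠ c ∧ a ≠ e ∧ b ≠ c ∧ b ≠ e ∧
      b.rep ∉ Submodule.span ℂ ({p.rep, a.rep} : Set (Fin 3 → ℂ)) ∧
      e.rep ∉ Submodule.span ℂ ({p.rep, c.rep} : Set (Fin 3 → ℂ)) := by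
    by_cases h2 : ∃ a ∈ Γ', ∃ c ∈ Γ', a ≠ c ∧
        c.rep ∈ Submodule.span ℂ ({p.rep, a.rep} : Set (Fin 3 → ℂ))
    · obtain ⟨a, ha, c, hc, hac, hmem⟩ := h2
      set W := Submodule.span ℂ ({p.rep, a.rep} : Set (Fin 3 → ℂ)) with hWdef
      have hc2 := classbound a ha
      rw [← hWdef] at hc2
      have h1 : (Γ'.filter (fun q => q.rep ∈ W)).card
          + (Γ'.filter (fun q => q.rep ∉ W)).card = Γ'.card :=
        Finset.card_filter_add_card_filter_not _
      set D := Γ'.filter (fun q => q.rep ∉ W) with hD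
      have hDcard : 2 ≤ D.card := by omega
      obtain ⟨b, hb⟩ := Finset.card_pos.1 (by omega : 0 < D.card)
      have : 0 < (D.erase b).card := by
        rw [Finset.card_erase_of_mem hb]; omega
      obtain ⟨e, he⟩ := Finset.card_pos.1 this
      have hbD : b.rep ∉ W := (Finset.mem_filter.1 hb).2
      have heD : e.rep ∉ W := (Finset.mem_filter.1 (Finset.mem_erase.1 he).2).2
      have hbΓ' : b ∈ Γ' := (Finset.mem_filter.1 hb).1
      have heΓ' : e ∈ Γ' := (Finset.mem_filter.1 (Finset.mem_erase.1 he).2).1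
      have haW : a.rep ∈ W := Submodule.subset_span (Set.mem_insert_of_mem _ rfl)
      have hWc : Submodule.span ℂ ({p.rep, c.rep} : Set (Fin 3 → ℂ)) = W :=
        span_pair_eq_of_mem hmem (rep_notMem_span (hmemΓ' c hc))
      refine ⟨a, ha, c, hc, b, hbΓ', e, heΓ', ?_, ?_, hac, ?_, ?_, ?_, hbD, ?_⟩
      · rintro rfl; exact hbD haW
      · rintro rfl; exact heD (hWc ▸ Submodule.subset_span (Set.mem_insert_of_mem _ rfl))
      · rintro rfl; exact heD haW
      · rintro rfl; exact hbD (hWc ▸ Submodule.subset_span (Set.mem_insert_of_mem _ rfl))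
      · exact Ne.symm (Finset.mem_erase.1 he).1
      · rw [hWc]; exact heD
    · push_neg at h2
      obtain ⟨a, ha⟩ := Finset.card_pos.1 (by omega : 0 < Γ'.card)
      obtain ⟨b, hb⟩ := Finset.card_pos.1
        (by rw [Finset.card_erase_of_mem ha]; omega : 0 < (Γ'.erase a).card)
      have hbΓ' : b ∈ Γ' := (Finset.mem_erase.1 hb).2
      obtain ⟨c, hc⟩ := Finset.card_pos.1
        (by rw [Finset.card_erase_of_mem hb, Finset.card_erase_of_mem ha]; omega :
          0 < ((Γ'.erase a).erase b).card)
      have hcΓ' : c ∈ Γ' := (Finset.mem_erase.1 (Finset.mem_erase.1 hc).2).2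
      obtain ⟨e, he⟩ := Finset.card_pos.1
        (by rw [Finset.card_erase_of_mem hc, Finset.card_erase_of_mem hb,
            Finset.card_erase_of_mem ha]; omega :
          0 < (((Γ'.erase a).erase b).erase c).card)
      have heΓ' : e ∈ Γ' := (Finset.mem_erase.1 (Finset.mem_erase.1 (Finset.mem_erase.1 he).2).2).2
      have hab : a ≠ b := fun h => (Finset.mem_erase.1 hb).1 h.symm
      have hac : a ≠ c := fun h => (Finset.mem_erase.1 (Finset.mem_erase.1 hc).2).1 h.symm
      have hbc : b ≠ c := fun h => (Finset.mem_erase.1 hc).1 h.symm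
      have hae : a ≠ e :=
        fun h => (Finset.mem_erase.1 (Finset.mem_erase.1 (Finset.mem_erase.1 he).2).2).1 h.symm
      have hbe : b ≠ e := fun h => (Finset.mem_erase.1 (Finset.mem_erase.1 he).2).1 h.symm
      have hce : c ≠ e := fun h => (Finset.mem_erase.1 he).1 h.symm
      exact ⟨a, ha, c, hcΓ', b, hbΓ', e, heΓ', hab, hce, hac, hae, hbc.symm ∘ Eq.symm ∘ id, hbe,
        h2 a ha b hbΓ' hab, h2 c hcΓ' e heΓ' hce⟩
  obtain ⟨a, ha, c, hc, b, hb, e, he, hab, hce, hac, hae, hbc, hbe,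
    hbspan, hespan⟩ := key
  -- linear forms for the two pair-lines
  have hpab : p.rep ∉ Submodule.span ℂ ({a.rep, b.rep} : Set (Fin 3 → ℂ)) := by
    intro hmem
    exact hbspan (mem_span_pair_symm hmem (rep_notMem_span (hmemΓ' a ha).symm))
  have hpce : p.rep ∉ Submodule.span ℂ ({c.rep, e.rep} : Set (Fin 3 → ℂ)) := by
    intro hmem
    exact hespan (mem_span_pair_symm hmem (rep_notMem_span (hmemΓ' c hc).symm))
  obtain ⟨L₁, hL₁p, hL₁W⟩ := sep hpab
  obtain ⟨L₂, hL₂p, hL₂W⟩ := sep hpce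
  -- linear forms through the remaining points
  have hchoice : ∀ q : Projectivization ℂ (Fin 3 → ℂ),
      ∃ L : (Fin 3 → ℂ) →ₗ[ℂ] ℂ, q ≠ p → (L q.rep = 0 ∧ L p.rep ≠ 0) := by
    intro q
    by_cases h : q = p
    · exact ⟨0, fun hq => absurd h hq⟩
    · have hpq : p.rep ∉ Submodule.span ℂ ({q.rep} : Set (Fin 3 → ℂ)) :=
        rep_notMem_span (Ne.symm h)
      obtain ⟨L, hL1, hL2⟩ := sep hpq
      exact ⟨L, fun _ => ⟨hL2 q.rep (Submodule.mem_span_singleton_self _), hL1⟩⟩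
  choose 𝓛 h𝓛 using hchoice
  set rest : Finset (Projectivization ℂ (Fin 3 → ℂ)) := Γ' \ {a, c, b, e} with hrestdef
  have hsub : ({a, c, b, e} : Finset (Projectivization ℂ (Fin 3 → ℂ))) ⊆ Γ' := by
    intro q hq
    simp only [Finset.mem_insert, Finset.mem_singleton] at hq
    rcases hq with rfl | rfl | rfl | rfl <;> assumption
  have h4 : ({a, c, b, e} : Finset (Projectivization ℂ (Fin 3 → ℂ))).card = 4 := by
    rw [Finset.card_insert_of_notMem (by simp [hac, hab, hae]),
      Finset.card_insert_of_notMem (by simp [Ne.symm hbc, hce]),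
      Finset.card_insert_of_notMem (by simp [hbe]), Finset.card_singleton]
  have hrestcard : rest.card = d - 4 := by
    rw [hrestdef, Finset.card_sdiff_of_subset hsub, hΓ', h4]
  refine ⟨linPoly L₁ * linPoly L₂ * ∏ q ∈ rest, linPoly (𝓛 q), ?_, ?_, ?_⟩
  · have h := ((linPoly_isHomogeneous L₁).mul (linPoly_isHomogeneous L₂)).mul
      (IsHomogeneous.prod rest (fun q => linPoly (𝓛 q)) (fun _ => 1) (fun q _ => linPoly_isHomogeneous (𝓛 q)))
    have hsum : (∑ _q ∈ rest, (1:ℕ)) = rest.card := by simp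
    have heq : 1 + 1 + (∑ _q ∈ rest, (1:ℕ)) = d - 2 := by omega
    exact heq ▸ h
  · intro q hq hqp
    have hqΓ' : q ∈ Γ' := Finset.mem_erase.2 ⟨hqp, hq⟩
    simp only [map_mul, map_prod, eval_linPoly]
    by_cases h1 : q = a ∨ q = b
    · have : L₁ q.rep = 0 := by
        rcases h1 with rfl | rfl
        · exact hL₁W _ (Submodule.subset_span (Set.mem_insert _ _))
        · exact hL₁W _ (Submodule.subset_span (Set.mem_insert_of_mem _ rfl))
      simp [this]
    by_cases h2 : q = c ∨ q = e
    · have : L₂ q.rep = 0 := by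
        rcases h2 with rfl | rfl
        · exact hL₂W _ (Submodule.subset_span (Set.mem_insert _ _))
        · exact hL₂W _ (Submodule.subset_span (Set.mem_insert_of_mem _ rfl))
      simp [this]
    · push_neg at h1 h2
      have hqrest : q ∈ rest := by
        rw [hrestdef, Finset.mem_sdiff]
        refine ⟨hqΓ', ?_⟩
        simp only [Finset.mem_insert, Finset.mem_singleton]
        push_neg
        exact ⟨h1.1, h2.1, h1.2, h2.2⟩
      rw [Finset.prod_eq_zero hqrest ((h𝓛 q hqp).1)]
      simp
  · simp only [map_mul, map_prod, eval_linPoly]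
    refine mul_ne_zero (mul_ne_zero hL₁p hL₂p) ?_
    rw [Finset.prod_ne_zero_iff]
    intro x hx
    have hxΓ' : x ∈ Γ' := (Finset.mem_sdiff.1 hx).1
    exact (h𝓛 x (hmemΓ' x hxΓ')).2
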